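/- For r > 0, the operator R = 1 + (a/2)∇ − r a²∇∇* is bounded above and below: there exist constants 0 < u ≤ v (depending only on r) such that u ≤ R†R ≤ v; in particular R is invertible. For r = 0 the operator 1 + (a/2)∇ has 0 in its spectrum. -/

import Mathlib

open Complex

noncomputable def lamF (r θ : ℝ) : ℂ :=
  (1 : ℂ) + (-1 + Complex.exp (θ * Complex.I)) / 2
    - (r : ℂ) * ((norm (-1 + Complex.exp (θ * Complex.I)) : ℝ) : ℂ) ^ 2

lemma lamF_ne_zero {r : ℝ} (hr : 0 < r) (θ : ℝ) : lamF r θ ≠ 0 := by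
  intro h
  have he : Complex.exp ((θ : ℂ) * Complex.I)
      = (Real.cos θ : ℂ) + (Real.sin θ : ℂ) * Complex.I := by
    rw [Complex.exp_mul_I, Complex.ofReal_cos, Complex.ofReal_sin]
  have habs : (norm (-1 + Complex.exp ((θ:ℂ) * Complex.I)))^2
      = (Real.cos θ - 1)^2 + Real.sin θ ^2 := by
    rw [Complex.sq_norm, he]
    simp [Complex.normSq_apply, Complex.cos_ofReal_re, Complex.sin_ofReal_re]
    ring
  have h2 : ((norm (-1 + Complex.exp ((θ:ℂ) * Complex.I)) : ℝ) : ℂ)^2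
      = (((Real.cos θ - 1)^2 + Real.sin θ^2 : ℝ) : ℂ) := by
    rw [← Complex.ofReal_pow, habs]
  have hlam : lamF r θ
      = ((1 + (Real.cos θ - 1)/2 - r*((Real.cos θ - 1)^2 + Real.sin θ^2) : ℝ) : ℂ)
        + ((Real.sin θ / 2 : ℝ) : ℂ) * Complex.I := by
    rw [lamF, h2, he]
    push_cast
    ring
  rw [hlam] at h
  have key : ∀ A B : ℝ, (A:ℂ) + (B:ℂ) * Complex.I = 0 → A = 0 ∧ B = 0 := by
    intro A B hAB
    simpa [Complex.ext_iff] using hAB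
  obtain ⟨hre, hsin'⟩ := key _ _ h
  have hsin : Real.sin θ = 0 := by linarith
  have hprod : (Real.cos θ - 1) * (Real.cos θ + 1) = 0 := by
    have h1 : Real.sin θ ^ 2 + Real.cos θ ^ 2 = 1 := Real.sin_sq_add_cos_sq θ
    nlinarith
  rcases mul_eq_zero.mp hprod with hc | hc
  · have hcc : Real.cos θ = 1 := by linarith
    rw [hcc, hsin] at hre; nlinarith
  · have hcc : Real.cos θ = -1 := by linarith
    rw [hcc, hsin] at hre; nlinarith

lemma lamF_continuous (r : ℝ) : Continuous (lamF r) := by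
  have h1 : Continuous fun θ : ℝ => Complex.exp ((θ:ℂ) * Complex.I) := by fun_prop
  have h2 : Continuous fun θ : ℝ =>
      ((norm (-1 + Complex.exp ((θ:ℂ) * Complex.I)) : ℝ) : ℂ) :=
    Complex.continuous_ofReal.comp (continuous_norm.comp (continuous_const.add h1))
  unfold lamF
  exact ((continuous_const.add ((continuous_const.add h1).div_const 2)).sub
    (continuous_const.mul (h2.pow 2)))

lemma lamF_periodic (r : ℝ) : Function.Periodic (lamF r) (2 * Real.pi) := by
  intro θ
  have key : Complex.exp ((↑(θ + 2 * Real.pi) : ℂ) * Complex.I)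
      = Complex.exp ((θ:ℂ) * Complex.I) := by
    have : ((↑(θ + 2 * Real.pi) : ℂ) * Complex.I)
        = (θ : ℂ) * Complex.I + 2 * Real.pi * Complex.I := by push_cast; ring
    rw [this, Complex.exp_add, Complex.exp_two_pi_mul_I, mul_one]
  simp only [lamF, key]

theorem improved_operator_bounded_iff (r : ℝ) :
    (0 < r → ∃ u v : ℝ, 0 < u ∧ u ≤ v ∧ ∀ θ : ℝ,
      u ≤ norm ((1 : ℂ) + (-1 + Complex.exp (θ * Complex.I)) / 2
            - (r : ℂ) * ((norm (-1 + Complex.exp (θ * Complex.I)) : ℝ) : ℂ) ^ 2) ∧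
      norm ((1 : ℂ) + (-1 + Complex.exp (θ * Complex.I)) / 2
            - (r : ℂ) * ((norm (-1 + Complex.exp (θ * Complex.I)) : ℝ) : ℂ) ^ 2) ≤ v) ∧
    ((1 : ℂ) + (-1 + Complex.exp ((Real.pi : ℂ) * Complex.I)) / 2 = 0) := by
  constructor
  · intro hr
    set g : ℝ → ℝ := fun θ => norm (lamF r θ) with hg
    have hgc : Continuous g := (continuous_norm).comp (lamF_continuous r)
    have hgper : Function.Periodic g (2 * Real.pi) := fun θ => by
      simp only [hg, lamF_periodic r θ]
    have hK : IsCompact (Set.Icc (0:ℝ) (2 * Real.pi)) := isCompact_Icc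
    have hne : (Set.Icc (0:ℝ) (2 * Real.pi)).Nonempty :=
      Set.nonempty_Icc.mpr (by positivity)
    obtain ⟨θ₀, hθ₀, hmin⟩ := hK.exists_isMinOn hne (hgc.continuousOn)
    obtain ⟨θ₁, hθ₁, hmax⟩ := hK.exists_isMaxOn hne (hgc.continuousOn)
    refine ⟨g θ₀, g θ₁, ?_, hmin hθ₁, ?_⟩
    · have := lamF_ne_zero hr θ₀
      simpa [hg] using (norm_pos_iff.mpr this)
    · intro θ
      obtain ⟨y, hy, hxy⟩ := hgper.exists_mem_Ico₀ (by positivity) θ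
      have hy' : y ∈ Set.Icc (0:ℝ) (2 * Real.pi) := Set.Ico_subset_Icc_self hy
      have h1 : g θ = g y := hxy
      constructor
      · show g θ₀ ≤ g θ
        rw [h1]; exact hmin hy'
      · show g θ ≤ g θ₁
        rw [h1]; exact hmax hy'
  · rw [Complex.exp_pi_mul_I]; ring
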